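/- Let A be a Z-graded commutative ring and p a homogeneous prime ideal. Let I(p) ⊆ Z be the subgroup (ideal of Z) generated by all integers i such that p_i ≠ A_i. Then the graded localization A_p is standard if and only if I(p) = Z, and A_p is quasi-standard if and only if I(p) ≠ 0, i.e. if and only if p does not contain all homogeneous elements of nonzero degree. -/

import Mathlib

/-- The degree-`d` part of the graded localization `S⁻¹A`: fractions `a/s` with `a` and `s`
homogeneous and `deg a - deg s = d`. -/
def LocGrade {A σ : Type*} [CommRing A] [SetLike σ A] (𝒜 : ℤ → σ) (S : Submonoid A)
    (d : ℤ) : Set (Localization S) :=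
  {x | ∃ (a : A) (s : S) (i : ℤ), a ∈ 𝒜 (d + i) ∧ (s : A) ∈ 𝒜 i ∧ x = Localization.mk a s}

/-- An ideal of the graded localization is homogeneous if it is generated by its
homogeneous elements. -/
def LocIsHomogeneous {A σ : Type*} [CommRing A] [SetLike σ A] (𝒜 : ℤ → σ) (S : Submonoid A)
    (Q : Ideal (Localization S)) : Prop :=
  Q = Ideal.span {x | (∃ d : ℤ, x ∈ LocGrade 𝒜 S d) ∧ x ∈ Q}

/-- The graded localization `S⁻¹A` is good: homogeneous primes are determined by their
degree-zero parts. -/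
def LocGood {A σ : Type*} [CommRing A] [SetLike σ A] (𝒜 : ℤ → σ) (S : Submonoid A) : Prop :=
  ∀ Q Q' : Ideal (Localization S), Q.IsPrime → Q'.IsPrime →
    LocIsHomogeneous 𝒜 S Q → LocIsHomogeneous 𝒜 S Q' →
    (∀ x ∈ LocGrade 𝒜 S 0, (x ∈ Q ↔ x ∈ Q')) → Q = Q'

/-- The graded localization `S⁻¹A` is quasi-standard: it contains an invertible
homogeneous element of positive degree. -/
def LocQuasiStandard {A σ : Type*} [CommRing A] [SetLike σ A] (𝒜 : ℤ → σ)
    (S : Submonoid A) : Prop :=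
  ∃ d : ℤ, 0 < d ∧ ∃ x ∈ LocGrade 𝒜 S d, IsUnit x

/-- The graded localization `S⁻¹A` is standard: it contains an invertible element of
degree `1`. -/
def LocStandard {A σ : Type*} [CommRing A] [SetLike σ A] (𝒜 : ℤ → σ)
    (S : Submonoid A) : Prop :=
  ∃ x ∈ LocGrade 𝒜 S 1, IsUnit x

/-- The graded localization `S⁻¹A` is quasi-trivial: every homogeneous element of nonzero
degree is nilpotent. -/
def LocQuasiTrivial {A σ : Type*} [CommRing A] [SetLike σ A] (𝒜 : ℤ → σ)
    (S : Submonoid A) : Prop :=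
  ∀ d : ℤ, d ≠ 0 → ∀ x ∈ LocGrade 𝒜 S d, IsNilpotent x

/-- The graded localization `S⁻¹A` is trivial: every homogeneous element of nonzero
degree is zero. -/
def LocTrivial {A σ : Type*} [CommRing A] [SetLike σ A] (𝒜 : ℤ → σ)
    (S : Submonoid A) : Prop :=
  ∀ d : ℤ, d ≠ 0 → ∀ x ∈ LocGrade 𝒜 S d, x = 0

section Aux

variable {A : Type*} [CommRing A] (𝒜 : ℤ → AddSubgroup A) [GradedRing 𝒜] (p : Ideal A)

/-- The set of degrees `i` with `p_i ≠ A_i`. -/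
def Dset : Set ℤ := {i : ℤ | ∃ a ∈ 𝒜 i, a ∉ p}

variable {𝒜 p}

lemma Dset_zero (hp : p.IsPrime) : (0 : ℤ) ∈ Dset 𝒜 p :=
  ⟨1, SetLike.one_mem_graded 𝒜, fun h => hp.ne_top ((Ideal.eq_top_iff_one p).mpr h)⟩

lemma Dset_add (hp : p.IsPrime) {i j : ℤ} (hi : i ∈ Dset 𝒜 p) (hj : j ∈ Dset 𝒜 p) :
    i + j ∈ Dset 𝒜 p := by
  obtain ⟨a, ha, hap⟩ := hi
  obtain ⟨b, hb, hbp⟩ := hj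
  exact ⟨a * b, SetLike.mul_mem_graded ha hb,
    fun h => ((hp.mem_or_mem h).elim hap hbp)⟩

lemma mem_span_Dset_iff (hp : p.IsPrime) (n : ℤ) :
    n ∈ Ideal.span (Dset 𝒜 p) ↔ ∃ i : ℤ, n + i ∈ Dset 𝒜 p ∧ i ∈ Dset 𝒜 p := by
  constructor
  · intro hn
    -- E := {n | ∃ i, n + i ∈ D ∧ i ∈ D} is closed under the span operations
    have Eneg : ∀ m : ℤ, (∃ i, m + i ∈ Dset 𝒜 p ∧ i ∈ Dset 𝒜 p) →
        ∃ i, -m + i ∈ Dset 𝒜 p ∧ i ∈ Dset 𝒜 p := by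
      rintro m ⟨i, h1, h2⟩
      exact ⟨m + i, by simpa using h2, h1⟩
    have Eadd : ∀ m k : ℤ, (∃ i, m + i ∈ Dset 𝒜 p ∧ i ∈ Dset 𝒜 p) →
        (∃ i, k + i ∈ Dset 𝒜 p ∧ i ∈ Dset 𝒜 p) →
        ∃ i, (m + k) + i ∈ Dset 𝒜 p ∧ i ∈ Dset 𝒜 p := by
      rintro m k ⟨i, h1, h2⟩ ⟨j, h3, h4⟩
      refine ⟨i + j, ?_, Dset_add hp h2 h4⟩
      have : m + k + (i + j) = (m + i) + (k + j) := by ring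
      rw [this]; exact Dset_add hp h1 h3
    have Ezero : ∃ i, (0 : ℤ) + i ∈ Dset 𝒜 p ∧ i ∈ Dset 𝒜 p :=
      ⟨0, by simpa using Dset_zero hp, Dset_zero hp⟩
    have Esmul : ∀ (c x : ℤ), (∃ i, x + i ∈ Dset 𝒜 p ∧ i ∈ Dset 𝒜 p) →
        ∃ i, c * x + i ∈ Dset 𝒜 p ∧ i ∈ Dset 𝒜 p := by
      intro c x hx
      induction c using Int.induction_on with
      | zero => simpa using Ezero
      | succ k ih =>
          have : ((k : ℤ) + 1) * x = k * x + x := by ring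
          rw [this]; exact Eadd _ _ ih hx
      | pred k ih =>
          have : (-(k : ℤ) - 1) * x = (-(k : ℤ)) * x + (-x) := by ring
          rw [this]; exact Eadd _ _ ih (Eneg _ hx)
    exact Submodule.span_induction (fun x hx => ⟨0, by simpa using hx, Dset_zero hp⟩)
      Ezero (fun x y _ _ hx hy => Eadd x y hx hy)
      (fun c x _ hx => Esmul c x hx) hn
  · rintro ⟨i, h1, h2⟩
    have : n = (n + i) - i := by ring
    rw [this]
    exact sub_mem (Ideal.subset_span h1) (Ideal.subset_span h2)

lemma unit_iff (hp : p.IsPrime) (T : Submonoid A)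
    (hT : (T : Set A) = {a : A | (∃ d : ℤ, a ∈ 𝒜 d) ∧ a ∉ p}) (d : ℤ) :
    (∃ x ∈ LocGrade 𝒜 T d, IsUnit x) ↔ ∃ i : ℤ, d + i ∈ Dset 𝒜 p ∧ i ∈ Dset 𝒜 p := by
  have memT : ∀ a : A, a ∈ T ↔ (∃ e : ℤ, a ∈ 𝒜 e) ∧ a ∉ p := by
    intro a
    constructor
    · intro h; have : a ∈ (T : Set A) := h; rw [hT] at this; exact this
    · intro h; show a ∈ (T : Set A); rw [hT]; exact h
  constructor
  · rintro ⟨x, ⟨a, s, i, ha, hs, rfl⟩, hu⟩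
    have hsT := (memT s).mp s.2
    refine ⟨i, ⟨a, ha, ?_⟩, ⟨s, hs, hsT.2⟩⟩
    -- a ∉ p since mk a s is a unit
    obtain ⟨y, hy⟩ := hu.exists_right_inv
    obtain ⟨b, t, rfl⟩ : ∃ b t, y = Localization.mk b t :=
      Localization.induction_on y fun z => ⟨z.1, z.2, rfl⟩
    rw [Localization.mk_mul, ← Localization.mk_one, Localization.mk_eq_mk_iff,
      Localization.r_iff_exists] at hy
    obtain ⟨c, hc⟩ := hy
    simp only [OneMemClass.coe_one, one_mul, Submonoid.coe_mul, mul_one] at hc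
    -- hc : ↑c * (a * b) = ↑c * (↑s * ↑t)
    intro hap
    have hcT := (memT c).mp c.2
    have htT := (memT t).mp t.2
    have : (c : A) * ((s : A) * (t : A)) ∈ p := by
      rw [← hc]
      exact Ideal.mul_mem_left _ _ (Ideal.mul_mem_right _ _ hap)
    rcases hp.mem_or_mem this with h | h
    · exact hcT.2 h
    · rcases hp.mem_or_mem h with h | h
      · exact hsT.2 h
      · exact htT.2 h
  · rintro ⟨i, ⟨a, ha, hap⟩, ⟨s, hs, hsp⟩⟩
    have hsT : s ∈ T := (memT s).mpr ⟨⟨i, hs⟩, hsp⟩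
    have haT : a ∈ T := (memT a).mpr ⟨⟨d + i, ha⟩, hap⟩
    refine ⟨Localization.mk a ⟨s, hsT⟩, ⟨a, ⟨s, hsT⟩, i, ha, hs, rfl⟩, ?_⟩
    rw [isUnit_iff_exists_inv]
    refine ⟨Localization.mk s ⟨a, haT⟩, ?_⟩
    rw [Localization.mk_mul]
    have : a * s = ((⟨s, hsT⟩ * ⟨a, haT⟩ : T) : A) := by
      simp [mul_comm]
    rw [this, Localization.mk_self]

end Aux

/-- For a homogeneous prime `p` of a `ℤ`-graded commutative ring `A`, let
`I(p) ⊆ ℤ` be the ideal generated by the integers `i` with `p_i ≠ A_i`, and let `T` be the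
multiplicative system of homogeneous elements outside `p`.  Then the graded localization
`A_p = T⁻¹A` is standard iff `I(p) = ℤ`, and quasi-standard iff `I(p) ≠ 0`, i.e. iff `p`
does not contain all homogeneous elements of nonzero degree. -/


theorem stmt_9 {A : Type*} [CommRing A] (𝒜 : ℤ → AddSubgroup A) [GradedRing 𝒜]
    (p : Ideal A) (hp : p.IsPrime) (hph : p.IsHomogeneous 𝒜) :
    ∀ T : Submonoid A, (T : Set A) = {a : A | (∃ d : ℤ, a ∈ 𝒜 d) ∧ a ∉ p} →
      ((LocStandard 𝒜 T ↔ Ideal.span {i : ℤ | ∃ a ∈ 𝒜 i, a ∉ p} = ⊤) ∧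
       (LocQuasiStandard 𝒜 T ↔ Ideal.span {i : ℤ | ∃ a ∈ 𝒜 i, a ∉ p} ≠ ⊥) ∧
       (LocQuasiStandard 𝒜 T ↔ ∃ d : ℤ, d ≠ 0 ∧ ∃ a ∈ 𝒜 d, a ∉ p)) := by
  intro T hT
  have hD : {i : ℤ | ∃ a ∈ 𝒜 i, a ∉ p} = Dset 𝒜 p := rfl
  rw [hD]
  have hQS : LocQuasiStandard 𝒜 T ↔ ∃ d : ℤ, d ≠ 0 ∧ d ∈ Dset 𝒜 p := by
    constructor
    · rintro ⟨d, hd, hx⟩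
      obtain ⟨i, h1, h2⟩ := (unit_iff hp T hT d).mp hx
      by_cases hi : i = 0
      · exact ⟨d, hd.ne', by simpa [hi] using h1⟩
      · exact ⟨i, hi, h2⟩
    · rintro ⟨d, hd, hdD⟩
      rcases lt_or_gt_of_ne hd with h | h
      · refine ⟨-d, by omega, (unit_iff hp T hT (-d)).mpr ⟨d, ?_, hdD⟩⟩
        simpa using Dset_zero hp
      · exact ⟨d, h, (unit_iff hp T hT d).mpr ⟨0, by simpa using hdD, Dset_zero hp⟩⟩
  refine ⟨?_, ?_, ?_⟩
  · rw [LocStandard, unit_iff hp T hT 1, ← mem_span_Dset_iff hp, Ideal.eq_top_iff_one]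
  · rw [hQS]
    constructor
    · rintro ⟨d, hd, hdD⟩ hbot
      have : d ∈ Ideal.span (Dset 𝒜 p) := Ideal.subset_span hdD
      rw [hbot, Ideal.mem_bot] at this
      exact hd this
    · intro hne
      obtain ⟨n, hn, hn0⟩ := Submodule.exists_mem_ne_zero_of_ne_bot hne
      obtain ⟨i, h1, h2⟩ := (mem_span_Dset_iff hp n).mp hn
      by_cases hi : i = 0
      · exact ⟨n, hn0, by simpa [hi] using h1⟩
      · exact ⟨i, hi, h2⟩
  · exact hQS
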